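/- Let γ, C₂, C₃ be real numbers, let f(y) = (C₂−γ)y + (C₃−C₂)y² − C₃y³, and let y ∈ (0,1) satisfy C₂ = γ/(1−y) − C₃y (so that f(y) = 0). Then f′(y) = y(C₃(1−y)² − γ)/(1−y). In particular, the endemic equilibrium y is linearly stable (f′(y) < 0) if and only if C₃(1−y)² < γ. -/
import Mathlib


/-- If `y ∈ (0,1)` lies on the endemic branch
`C₂ = γ/(1−y) − C₃y` of the cubic contagion model
`f(y) = (C₂−γ)y + (C₃−C₂)y² − C₃y³`, then
`f′(y) = y(C₃(1−y)² − γ)/(1−y)`; in particular `f′(y) < 0` iff `C₃(1−y)² < γ`. -/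
theorem cubic_endemic_stability (γ C₂ C₃ : ℝ) (f : ℝ → ℝ)
    (hf : ∀ y : ℝ, f y = (C₂ - γ) * y + (C₃ - C₂) * y ^ 2 - C₃ * y ^ 3)
    (y : ℝ) (hy : y ∈ Set.Ioo (0 : ℝ) 1)
    (hbranch : C₂ = γ / (1 - y) - C₃ * y) :
    deriv f y = y * (C₃ * (1 - y) ^ 2 - γ) / (1 - y) ∧
    (deriv f y < 0 ↔ C₃ * (1 - y) ^ 2 < γ) := by
  obtain ⟨hy0, hy1⟩ := hy
  have hne : (1 : ℝ) - y ≠ 0 := by linarith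
  have hd : deriv f y = (C₂ - γ) + 2 * (C₃ - C₂) * y - 3 * C₃ * y ^ 2 := by
    have : f = fun x => (C₂ - γ) * x + (C₃ - C₂) * x ^ 2 - C₃ * x ^ 3 :=
      funext hf
    rw [this]
    have h1 : HasDerivAt (fun x : ℝ => (C₂ - γ) * x + (C₃ - C₂) * x ^ 2 - C₃ * x ^ 3)
        ((C₂ - γ) * 1 + (C₃ - C₂) * (2 * y ^ 1) - C₃ * (3 * y ^ 2)) y := by
      exact (((hasDerivAt_id y).const_mul (C₂ - γ)).add
        ((hasDerivAt_pow 2 y).const_mul (C₃ - C₂))).sub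
        ((hasDerivAt_pow 3 y).const_mul C₃) |>.congr_deriv (by ring)
    rw [h1.deriv]; ring
  have key : deriv f y = y * (C₃ * (1 - y) ^ 2 - γ) / (1 - y) := by
    rw [hd, hbranch]
    field_simp
    ring
  refine ⟨key, ?_⟩
  rw [key]
  rw [div_neg_iff]
  constructor
  · rintro (⟨h, h2⟩ | ⟨h, h2⟩)
    · linarith
    · nlinarith
  · intro h
    right
    constructor
    · nlinarith
    · linarith
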